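/- A compact Boolean topological orthoalgebra is a topological lattice: both ∧ and ∨ are continuous. -/

import Mathlib

/-- An orthoalgebra: a partial commutative, associative operation `oplus`
(defined on the relation `perp`), with unique orthocomplements, in which
`a ⊥ a` forces `a = 0`. -/
structure Orthoalgebra (L : Type*) where
  perp : L → L → Prop
  oplus : L → L → L
  compl : L → L
  zero : L
  one : L
  perp_comm : ∀ a b, perp a b → perp b a
  oplus_comm : ∀ a b, perp a b → oplus a b = oplus b a
  assoc : ∀ a b c, perp b c → perp a (oplus b c) →
    perp a b ∧ perp (oplus a b) c ∧ oplus a (oplus b c) = oplus (oplus a b) c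
  perp_compl : ∀ a, perp a (compl a)
  oplus_compl : ∀ a, oplus a (compl a) = one
  compl_unique : ∀ a b, perp a b → oplus a b = one → b = compl a
  perp_self_eq_zero : ∀ a, perp a a → a = zero
  zero_def : compl one = zero

/-- The induced order: `a ≤ b` iff `a ⊥ b'`. -/
def Orthoalgebra.le {L : Type*} (A : Orthoalgebra L) (a b : L) : Prop :=
  A.perp a (A.compl b)

/-- The partial difference `b ⊖ a = (a ⊕ b')'` (the unique `c` with `b = a ⊕ c` when `a ≤ b`). -/
def Orthoalgebra.ominus {L : Type*} (A : Orthoalgebra L) (b a : L) : L :=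
  A.compl (A.oplus a (A.compl b))

/-- A topological orthoalgebra: `⊥` is closed, `⊕` is continuous on `⊥`,
and `'` is continuous. -/
structure IsTOA {L : Type*} [TopologicalSpace L] (A : Orthoalgebra L) : Prop where
  closed_perp : IsClosed {p : L × L | A.perp p.1 p.2}
  cont_oplus : ContinuousOn (fun p : L × L => A.oplus p.1 p.2) {p : L × L | A.perp p.1 p.2}
  cont_compl : Continuous A.compl

/-- Compatibility: `a` and `b` admit a Mackey decomposition. -/
def Orthoalgebra.Compat {L : Type*} (A : Orthoalgebra L) (a b : L) : Prop :=
  ∃ c, A.le c a ∧ A.le c b ∧ A.perp a (A.ominus b c)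

/-- An atom: a minimal nonzero element. -/
def Orthoalgebra.IsAtom' {L : Type*} (A : Orthoalgebra L) (a : L) : Prop :=
  a ≠ A.zero ∧ ∀ b, A.le b a → b = A.zero ∨ b = a

namespace OAaux

variable {L : Type*} (A : Orthoalgebra L)

lemma cc (a : L) : A.compl (A.compl a) = a := by
  have h := A.perp_comm _ _ (A.perp_compl a)
  have h2 : A.oplus (A.compl a) a = A.one := by
    rw [A.oplus_comm _ _ h]; exact A.oplus_compl a
  exact (A.compl_unique _ _ h h2).symm

lemma oz (a : L) : A.oplus a A.zero = a := by
  have h10 : A.perp A.one A.zero := by rw [← A.zero_def]; exact A.perp_compl A.one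
  have h01 : A.perp A.zero A.one := A.perp_comm _ _ h10
  have h1 : A.oplus A.one A.zero = A.one := by rw [← A.zero_def]; exact A.oplus_compl A.one
  have hz1 : A.oplus A.zero A.one = A.one := by rw [A.oplus_comm _ _ h01]; exact h1
  have hperp : A.perp A.zero (A.oplus a (A.compl a)) := by rw [A.oplus_compl a]; exact h01
  obtain ⟨q1, q2, q3⟩ := A.assoc A.zero a (A.compl a) (A.perp_compl a) hperp
  have h4 : A.oplus (A.oplus A.zero a) (A.compl a) = A.one := by
    rw [← q3, A.oplus_compl a]; exact hz1
  have h5 : A.compl a = A.compl (A.oplus A.zero a) := A.compl_unique _ _ q2 h4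
  have h6 : A.oplus A.zero a = a := by
    have h7 := congrArg A.compl h5
    rw [cc, cc] at h7
    exact h7.symm
  rw [A.oplus_comm _ _ (A.perp_comm _ _ q1)]; exact h6

lemma le_op_l {a b : L} (h : A.perp a b) : A.perp a (A.compl (A.oplus a b)) := by
  have hs : A.perp (A.compl (A.oplus a b)) (A.oplus a b) :=
    A.perp_comm _ _ (A.perp_compl _)
  obtain ⟨q1, -, -⟩ := A.assoc (A.compl (A.oplus a b)) a b h hs
  exact A.perp_comm _ _ q1

lemma le_op_r {a b : L} (h : A.perp a b) : A.perp b (A.compl (A.oplus a b)) := by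
  have h' := A.perp_comm _ _ h
  have := le_op_l A h'
  rwa [A.oplus_comm b a h'] at this

lemma om_unique {a c s : L} (h : A.perp a c) (he : A.oplus a c = s) :
    c = A.ominus s a := by
  have hs : A.perp (A.compl s) (A.oplus a c) := by
    rw [he]; exact A.perp_comm _ _ (A.perp_compl s)
  obtain ⟨q1, q2, q3⟩ := A.assoc (A.compl s) a c h hs
  have h4 : A.oplus (A.oplus (A.compl s) a) c = A.one := by
    rw [← q3, he, A.oplus_comm _ _ (A.perp_comm s _ (A.perp_compl s))]
    exact A.oplus_compl s
  have h5 : c = A.compl (A.oplus (A.compl s) a) := A.compl_unique _ _ q2 h4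
  show c = A.compl (A.oplus a (A.compl s))
  rw [← A.oplus_comm (A.compl s) a q1]
  exact h5

lemma om_spec {a c : L} (h : A.perp c (A.compl a)) :
    A.perp c (A.ominus a c) ∧ A.oplus c (A.ominus a c) = a := by
  have h2 : A.perp (A.compl (A.oplus c (A.compl a))) (A.oplus c (A.compl a)) :=
    A.perp_comm _ _ (A.perp_compl _)
  obtain ⟨p1, p2, p3⟩ := A.assoc (A.compl (A.oplus c (A.compl a))) c (A.compl a) h h2
  have h4 : A.oplus (A.compl (A.oplus c (A.compl a))) (A.oplus c (A.compl a)) = A.one := by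
    rw [A.oplus_comm _ _ h2]; exact A.oplus_compl _
  have h5 : A.oplus (A.oplus (A.compl (A.oplus c (A.compl a))) c) (A.compl a) = A.one := by
    rw [← p3]; exact h4
  have h6 : A.compl a = A.compl (A.oplus (A.compl (A.oplus c (A.compl a))) c) :=
    A.compl_unique _ _ p2 h5
  have h7 : A.oplus (A.compl (A.oplus c (A.compl a))) c = a := by
    have h8 := congrArg A.compl h6
    rw [cc, cc] at h8
    exact h8.symm
  refine ⟨A.perp_comm _ _ p1, ?_⟩
  show A.oplus c (A.compl (A.oplus c (A.compl a))) = a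
  rw [A.oplus_comm _ _ (A.perp_comm _ _ p1)]
  exact h7

section Lattice

variable [DistribLattice L] [BoundedOrder L]
variable (horder : ∀ a b : L, A.le a b ↔ a ≤ b)
variable (hinf : ∀ a : L, a ⊓ A.compl a = ⊥)
variable (hsup : ∀ a : L, a ⊔ A.compl a = ⊤)

set_option linter.unusedSectionVars false

include horder hinf hsup

lemma perp_iff (a b : L) : A.perp a b ↔ a ≤ A.compl b := by
  have h := horder a (A.compl b)
  rw [Orthoalgebra.le, cc] at h
  exact h

lemma le_compl_of_inf {a b : L} (h : a ⊓ b = ⊥) : a ≤ A.compl b := by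
  calc a = a ⊓ (b ⊔ A.compl b) := by rw [hsup b, inf_top_eq]
    _ = (a ⊓ b) ⊔ (a ⊓ A.compl b) := by rw [inf_sup_left]
    _ = a ⊓ A.compl b := by rw [h, bot_sup_eq]
    _ ≤ A.compl b := inf_le_right

lemma inf_of_le_compl {a b : L} (h : a ≤ A.compl b) : a ⊓ b = ⊥ := by
  refine le_antisymm ?_ bot_le
  calc a ⊓ b ≤ A.compl b ⊓ b := inf_le_inf_right b h
    _ = ⊥ := by rw [inf_comm]; exact hinf b

lemma perp_iff_inf (a b : L) : A.perp a b ↔ a ⊓ b = ⊥ :=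
  ⟨fun h => inf_of_le_compl A horder hinf hsup ((perp_iff A horder hinf hsup a b).mp h),
   fun h => (perp_iff A horder hinf hsup a b).mpr (le_compl_of_inf A horder hinf hsup h)⟩

lemma compl_anti {a b : L} (h : a ≤ b) : A.compl b ≤ A.compl a := by
  apply le_compl_of_inf A horder hinf hsup
  refine le_antisymm ?_ bot_le
  calc A.compl b ⊓ a ≤ A.compl b ⊓ b := inf_le_inf_left _ h
    _ = ⊥ := by rw [inf_comm]; exact hinf b

lemma isCompl_compl (a : L) : IsCompl a (A.compl a) :=
  ⟨disjoint_iff.mpr (hinf a), codisjoint_iff.mpr (hsup a)⟩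

lemma sup_eq_compl_inf (a b : L) :
    a ⊔ b = A.compl (A.compl a ⊓ A.compl b) := by
  have h1 : IsCompl (A.compl a ⊓ A.compl b) (A.compl (A.compl a ⊓ A.compl b)) :=
    isCompl_compl A horder hinf hsup _
  have h2 : IsCompl (A.compl a ⊓ A.compl b) (a ⊔ b) :=
    ((isCompl_compl A horder hinf hsup a).sup_inf (isCompl_compl A horder hinf hsup b)).symm
  exact h2.right_unique h1

lemma oplus_eq_sup {a b : L} (h : A.perp a b) : A.oplus a b = a ⊔ b := by
  have ha : a ≤ A.oplus a b := (horder _ _).mp (le_op_l A h)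
  have hb : b ≤ A.oplus a b := (horder _ _).mp (le_op_r A h)
  have hts : a ⊔ b ≤ A.oplus a b := sup_le ha hb
  obtain ⟨hw1, hw2⟩ := om_spec A ((horder _ _).mpr hts)
  obtain ⟨hu1, hu2⟩ := om_spec A ((horder _ _).mpr (le_sup_left : a ≤ a ⊔ b))
  set u := A.ominus (a ⊔ b) a with hu
  set w := A.ominus (A.oplus a b) (a ⊔ b) with hw
  have hwu_t : A.perp w (A.oplus u a) := by
    have h1 : A.perp w (a ⊔ b) := A.perp_comm _ _ hw1
    rw [← hu2, A.oplus_comm a u hu1] at h1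
    exact h1
  obtain ⟨r1, r2, r3⟩ := A.assoc w u a (A.perp_comm _ _ hu1) hwu_t
  have key : A.oplus a (A.oplus w u) = A.oplus a b := by
    calc A.oplus a (A.oplus w u) = A.oplus (A.oplus w u) a :=
          A.oplus_comm _ _ (A.perp_comm _ _ r2)
      _ = A.oplus w (A.oplus u a) := r3.symm
      _ = A.oplus w (A.oplus a u) := by rw [A.oplus_comm u a (A.perp_comm _ _ hu1)]
      _ = A.oplus w (a ⊔ b) := by rw [hu2]
      _ = A.oplus (a ⊔ b) w := A.oplus_comm _ _ (A.perp_comm _ _ hw1)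
      _ = A.oplus a b := hw2
  have hwu_eq_b : A.oplus w u = b := by
    have e1 := om_unique A (A.perp_comm _ _ r2) key
    have e2 := om_unique A h rfl
    exact e1.trans e2.symm
  have hw_le_b : w ≤ b := by
    have h2 := (horder _ _).mp (le_op_l A r1)
    rwa [hwu_eq_b] at h2
  have hw_le_b' : w ≤ A.compl b := by
    have h1 : w ≤ A.compl (a ⊔ b) := (perp_iff A horder hinf hsup _ _).mp (A.perp_comm _ _ hw1)
    exact le_trans h1 (compl_anti A horder hinf hsup (le_sup_right : b ≤ a ⊔ b))
  have hwbot : w ≤ (⊥ : L) := by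
    have hx : w ≤ b ⊓ A.compl b := le_inf hw_le_b hw_le_b'
    rwa [hinf b] at hx
  have hww : A.perp w w := by
    refine (perp_iff_inf A horder hinf hsup w w).mpr ?_
    exact le_antisymm (le_trans inf_le_left hwbot) bot_le
  have hwz : w = A.zero := A.perp_self_eq_zero w hww
  rw [← hw2, hwz, oz]

end Lattice

end OAaux

open OAaux in
/-- A compact Boolean topological orthoalgebra is a topological lattice. -/
theorem compact_boolean_toa_topological_lattice {L : Type*} [TopologicalSpace L] [CompactSpace L]
    [DistribLattice L] [BoundedOrder L]
    (A : Orthoalgebra L) (hA : IsTOA A)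
    (horder : ∀ a b : L, A.le a b ↔ a ≤ b)
    (hinf : ∀ a : L, a ⊓ A.compl a = ⊥)
    (hsup : ∀ a : L, a ⊔ A.compl a = ⊤) :
    Continuous (fun p : L × L => p.1 ⊓ p.2) ∧ Continuous (fun p : L × L => p.1 ⊔ p.2) := by
  classical
  set P : Set (L × L) := {p : L × L | A.perp p.1 p.2} with hP
  -- the order is closed, hence `L` is Hausdorff
  have hle_closed : IsClosed {p : L × L | p.1 ≤ p.2} := by
    have hset : {p : L × L | p.1 ≤ p.2} = (fun p : L × L => (p.1, A.compl p.2)) ⁻¹' P := by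
      ext p
      simp only [Set.mem_setOf_eq, Set.mem_preimage, hP]
      exact ⟨fun h => (horder p.1 p.2).mpr h, fun h => (horder p.1 p.2).mp h⟩
    rw [hset]
    exact hA.closed_perp.preimage (continuous_fst.prodMk (hA.cont_compl.comp continuous_snd))
  haveI : OrderClosedTopology L := ⟨hle_closed⟩
  -- the Mackey relation
  set M : Set (L × L × L) :=
    {q : L × L × L | A.perp q.1 q.2.1 ∧ (A.perp q.2.1 q.2.2 ∧
      A.perp q.1 (A.oplus q.2.1 q.2.2))} with hMdef
  have hM_closed : IsClosed M := by
    have c1 : IsClosed {q : L × L × L | A.perp q.1 q.2.1} :=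
      hA.closed_perp.preimage (continuous_fst.prodMk (continuous_fst.comp continuous_snd))
    have c2 : IsClosed {q : L × L × L | A.perp q.2.1 q.2.2} :=
      hA.closed_perp.preimage
        ((continuous_fst.comp continuous_snd).prodMk (continuous_snd.comp continuous_snd))
    have hmap : ContinuousOn (fun q : L × L × L => (q.1, A.oplus q.2.1 q.2.2))
        {q : L × L × L | A.perp q.2.1 q.2.2} := by
      apply ContinuousOn.prodMk continuous_fst.continuousOn
      exact hA.cont_oplus.comp
        ((continuous_fst.comp continuous_snd).prodMk
          (continuous_snd.comp continuous_snd)).continuousOn (fun q hq => hq)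
    have c3 : IsClosed ({q : L × L × L | A.perp q.2.1 q.2.2} ∩
        (fun q : L × L × L => (q.1, A.oplus q.2.1 q.2.2)) ⁻¹' P) :=
      hmap.preimage_isClosed_of_isClosed c2 hA.closed_perp
    have : M = {q : L × L × L | A.perp q.1 q.2.1} ∩
        ({q : L × L × L | A.perp q.2.1 q.2.2} ∩
          (fun q : L × L × L => (q.1, A.oplus q.2.1 q.2.2)) ⁻¹' P) := by
      ext q
      simp only [hMdef, hP, Set.mem_setOf_eq, Set.mem_inter_iff, Set.mem_preimage]
    rw [this]
    exact c1.inter c3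
  have hM_cpt : IsCompact M := hM_closed.isCompact
  set φ : L × L × L → (L × L) × L :=
    fun q => ((A.oplus q.1 q.2.1, A.oplus q.2.1 q.2.2), q.2.1) with hφdef
  have hφ : ContinuousOn φ M := by
    have o1 : ContinuousOn (fun q : L × L × L => A.oplus q.1 q.2.1) M :=
      hA.cont_oplus.comp
        (continuous_fst.prodMk (continuous_fst.comp continuous_snd)).continuousOn
        (fun q hq => hq.1)
    have o2 : ContinuousOn (fun q : L × L × L => A.oplus q.2.1 q.2.2) M :=
      hA.cont_oplus.comp
        ((continuous_fst.comp continuous_snd).prodMk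
          (continuous_snd.comp continuous_snd)).continuousOn
        (fun q hq => hq.2.1)
    exact (o1.prodMk o2).prodMk (continuous_fst.comp continuous_snd).continuousOn
  set G : Set ((L × L) × L) := φ '' M with hGdef
  have hG_cpt : IsCompact G := hM_cpt.image_of_continuousOn hφ
  have hG_eq : G = {p : (L × L) × L | p.1.1 ⊓ p.1.2 = p.2} := by
    apply Set.eq_of_subset_of_subset
    · rintro p ⟨⟨x, c, z⟩, ⟨h1, h2, h3⟩, rfl⟩
      show A.oplus x c ⊓ A.oplus c z = c
      rw [oplus_eq_sup A horder hinf hsup h1, oplus_eq_sup A horder hinf hsup h2]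
      have hxz : x ⊓ (c ⊔ z) = ⊥ := by
        have h4 := (perp_iff_inf A horder hinf hsup x (A.oplus c z)).mp h3
        rwa [oplus_eq_sup A horder hinf hsup h2] at h4
      calc (x ⊔ c) ⊓ (c ⊔ z) = x ⊓ (c ⊔ z) ⊔ c ⊓ (c ⊔ z) := by rw [inf_sup_right]
        _ = ⊥ ⊔ c := by rw [hxz, inf_sup_self]
        _ = c := bot_sup_eq c
    · rintro ⟨⟨a, b⟩, c0⟩ hp
      simp only [Set.mem_setOf_eq] at hp
      subst hp
      obtain ⟨hx1, hx2⟩ := om_spec A ((horder (a ⊓ b) a).mpr inf_le_left)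
      obtain ⟨hz1, hz2⟩ := om_spec A ((horder (a ⊓ b) b).mpr inf_le_right)
      refine ⟨(A.ominus a (a ⊓ b), a ⊓ b, A.ominus b (a ⊓ b)),
        ⟨A.perp_comm _ _ hx1, hz1, ?_⟩, ?_⟩
      · rw [hz2]
        refine (perp_iff_inf A horder hinf hsup _ b).mpr ?_
        have hx_le_a : A.ominus a (a ⊓ b) ≤ a := by
          have h5 := (horder _ _).mp (le_op_r A hx1)
          rwa [hx2] at h5
        have hx_le_c' : A.ominus a (a ⊓ b) ≤ A.compl (a ⊓ b) :=
          (perp_iff A horder hinf hsup _ _).mp (A.perp_comm _ _ hx1)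
        have h6 : A.ominus a (a ⊓ b) ⊓ b ≤ (a ⊓ b) ⊓ A.compl (a ⊓ b) :=
          le_inf (inf_le_inf_right b hx_le_a) (le_trans inf_le_left hx_le_c')
        rw [hinf (a ⊓ b)] at h6
        exact le_antisymm h6 bot_le
      · show ((A.oplus (A.ominus a (a ⊓ b)) (a ⊓ b), A.oplus (a ⊓ b) (A.ominus b (a ⊓ b))),
          a ⊓ b) = ((a, b), a ⊓ b)
        rw [A.oplus_comm _ _ (A.perp_comm _ _ hx1), hx2, hz2]
  have hG_closed : IsClosed G := hG_cpt.isClosed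
  have cont_inf : Continuous (fun p : L × L => p.1 ⊓ p.2) := by
    rw [continuous_iff_isClosed]
    intro K hK
    have hpre : (fun p : L × L => p.1 ⊓ p.2) ⁻¹' K =
        Prod.fst '' (G ∩ {p : (L × L) × L | p.2 ∈ K}) := by
      ext p
      constructor
      · intro hp
        refine ⟨(p, p.1 ⊓ p.2), ⟨?_, hp⟩, rfl⟩
        rw [hG_eq]; exact rfl
      · rintro ⟨q, ⟨hqG, hqK⟩, rfl⟩
        rw [hG_eq] at hqG
        show q.1.1 ⊓ q.1.2 ∈ K
        rw [hqG]; exact hqK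
    rw [hpre]
    exact ((hG_cpt.inter_right (hK.preimage continuous_snd)).image continuous_fst).isClosed
  refine ⟨cont_inf, ?_⟩
  have hs : (fun p : L × L => p.1 ⊔ p.2) =
      fun p : L × L => A.compl (A.compl p.1 ⊓ A.compl p.2) :=
    funext fun p => sup_eq_compl_inf A horder hinf hsup p.1 p.2
  rw [hs]
  exact hA.cont_compl.comp (cont_inf.comp
    ((hA.cont_compl.comp continuous_fst).prodMk (hA.cont_compl.comp continuous_snd)))
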